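/- Let Y and Z be independent integrable real random variables on a probability space with Y ≥ 0 almost surely, and let s₀ > 0. Then (Y Z − s₀)⁺ is integrable and |E[(Y Z − s₀)⁺] − s₀ E[(Y − 1)⁺]| ≤ E[Y] · E[|Z − s₀|]. -/

import Mathlib

open MeasureTheory

/-- If `Y, Z` are independent integrable random variables with
`Y ≥ 0` a.s. and `s₀ > 0`, then `(YZ − s₀)⁺` is integrable and
`|E[(YZ − s₀)⁺] − s₀ E[(Y − 1)⁺]| ≤ E[Y] E[|Z − s₀|]`. -/
theorem integrable_and_abs_integral_product_call_le
    {Ω : Type*} [MeasurableSpace Ω] (P : Measure Ω) [IsProbabilityMeasure P]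
    (Y Z : Ω → ℝ) (hY : Integrable Y P) (hZ : Integrable Z P)
    (hindep : ProbabilityTheory.IndepFun Y Z P)
    (hYpos : ∀ᵐ ω ∂P, 0 ≤ Y ω) (s0 : ℝ) (hs0 : 0 < s0) :
    Integrable (fun ω => max (Y ω * Z ω - s0) 0) P ∧
      |(∫ ω, max (Y ω * Z ω - s0) 0 ∂P) - s0 * ∫ ω, max (Y ω - 1) 0 ∂P| ≤
        (∫ ω, Y ω ∂P) * ∫ ω, |Z ω - s0| ∂P := by
  have hYZ : Integrable (fun ω => Y ω * Z ω) P := hindep.integrable_mul hY hZ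
  have h1 : Integrable (fun ω => max (Y ω * Z ω - s0) 0) P :=
    (hYZ.sub (integrable_const s0)).pos_part
  have h2 : Integrable (fun ω => max (Y ω - 1) 0) P :=
    (hY.sub (integrable_const 1)).pos_part
  -- independence of Y and |Z - s0|
  have hindep' : ProbabilityTheory.IndepFun Y (fun ω => |Z ω - s0|) P :=
    hindep.comp measurable_id ((measurable_id.sub_const s0).abs)
  have hZabs : Integrable (fun ω => |Z ω - s0|) P := (hZ.sub (integrable_const s0)).abs
  have h3 : Integrable (fun ω => Y ω * |Z ω - s0|) P :=
    hindep'.integrable_mul hY hZabs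
  refine ⟨h1, ?_⟩
  have hmul : ∫ ω, Y ω * |Z ω - s0| ∂P = (∫ ω, Y ω ∂P) * ∫ ω, |Z ω - s0| ∂P :=
    hindep'.integral_fun_mul_eq_mul_integral hY.aestronglyMeasurable hZabs.aestronglyMeasurable
  have hsub : (∫ ω, max (Y ω * Z ω - s0) 0 ∂P) - s0 * ∫ ω, max (Y ω - 1) 0 ∂P
      = ∫ ω, (max (Y ω * Z ω - s0) 0 - s0 * max (Y ω - 1) 0) ∂P := by
    rw [integral_sub h1 (h2.const_mul s0), integral_const_mul]
  rw [hsub, ← hmul]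
  calc |∫ ω, (max (Y ω * Z ω - s0) 0 - s0 * max (Y ω - 1) 0) ∂P|
      ≤ ∫ ω, |max (Y ω * Z ω - s0) 0 - s0 * max (Y ω - 1) 0| ∂P :=
        by
          simpa [Real.norm_eq_abs] using
            norm_integral_le_integral_norm (μ := P)
              (fun ω => max (Y ω * Z ω - s0) 0 - s0 * max (Y ω - 1) 0)
    _ ≤ ∫ ω, Y ω * |Z ω - s0| ∂P := by
        refine integral_mono_ae (h1.sub (h2.const_mul s0)).abs h3 ?_
        filter_upwards [hYpos] with ω hω
        have key : s0 * max (Y ω - 1) 0 = max (s0 * Y ω - s0) 0 := by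
          rw [mul_max_of_nonneg _ _ hs0.le, mul_sub, mul_one, mul_zero]
        rw [key]
        calc |max (Y ω * Z ω - s0) 0 - max (s0 * Y ω - s0) 0|
            ≤ |(Y ω * Z ω - s0) - (s0 * Y ω - s0)| :=
              abs_max_sub_max_le_abs _ _ _
          _ = Y ω * |Z ω - s0| := by
              rw [sub_sub_sub_cancel_right, ← mul_comm (Y ω) s0, ← mul_sub,
                abs_mul, abs_of_nonneg hω]
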